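/- Let (M, ∘, e) be an F-manifold, let v₁ = ℰ be an eventual identity, and let v₂ = ℰ ∘ α with α a weak eventual identity such that [v₁, v₂] = 0. Define v_i = ℰ ∘ α^{i−1}. Then [v_i, v_j] = (j − i) α^{i+j−3} ∘ [v₁, v₂] = 0 for all i, j ≥ 1; hence the vector fields v₁, …, v_n pairwise commute. -/
import Mathlib


/-- Abstract formalization: on an F-manifold, let `v₁ = ℰ` be an eventual identity
(invertible weak eventual identity), `α` a weak eventual identity with
`v₂ = ℰ∘α` and `[v₁, v₂] = 0`, and `v_i = ℰ∘α^{i−1}`.  Then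
`[v_i, v_j] = (j−i) α^{i+j−3} ∘ [v₁,v₂] = 0`, so the `v_i` pairwise commute. -/
theorem stmt11 (V : Type*) [LieRing V]
    (mul : V → V → V) (e : V)
    (hcomm : ∀ X Y, mul X Y = mul Y X)
    (hassoc : ∀ X Y Z, mul (mul X Y) Z = mul X (mul Y Z))
    (hunit : ∀ X, mul e X = X)
    (haddl : ∀ X Y Z, mul (X + Y) Z = mul X Z + mul Y Z)
    (LD : V → V → V → V)
    (hLD : ∀ Z X Y, LD Z X Y = ⁅Z, mul X Y⁆ - mul ⁅Z, X⁆ Y - mul X ⁅Z, Y⁆)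
    (hHM : ∀ X Y Z W, LD (mul X Y) Z W = mul X (LD Y Z W) + mul Y (LD X Z W))
    (ℰ Einv α : V)
    (hinv : mul ℰ Einv = e)
    (hℰ : ∀ X Y, LD ℰ X Y = mul ⁅e, ℰ⁆ (mul X Y))
    (hα : ∀ X Y, LD α X Y = mul ⁅e, α⁆ (mul X Y))
    (apow : ℕ → V) (hpow0 : apow 0 = e) (hpowS : ∀ k, apow (k + 1) = mul α (apow k))
    (v : ℕ → V) (hv : ∀ i, v i = mul ℰ (apow (i - 1)))
    (hcomm12 : ⁅v 1, v 2⁆ = 0) :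
    (∀ i j : ℕ, 1 ≤ i → 1 ≤ j → 3 ≤ i + j →
      ⁅v i, v j⁆ = ((j : ℤ) - (i : ℤ)) • mul (apow (i + j - 3)) ⁅v 1, v 2⁆) ∧
    (∀ i j : ℕ, 1 ≤ i → 1 ≤ j → ⁅v i, v j⁆ = 0) := by
  have hz : ∀ X, mul 0 X = 0 := fun X => by
    have h := haddl 0 0 X
    rw [add_zero] at h
    exact left_eq_add.mp h
  letI : CommRing V :=
    { (inferInstance : AddCommGroup V) with
      mul := mul
      one := e
      one_mul := hunit
      mul_one := fun X => (hcomm X e).trans (hunit X)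
      mul_assoc := hassoc
      mul_comm := hcomm
      right_distrib := haddl
      left_distrib := fun X Y Z => by
        show mul X (Y + Z) = mul X Y + mul X Z
        rw [hcomm X (Y + Z), haddl, hcomm Y X, hcomm Z X]
      zero_mul := hz
      mul_zero := fun X => (hcomm X 0).trans (hz X) }
  have hm : ∀ a b, mul a b = a * b := fun _ _ => rfl
  have he : e = (1 : V) := rfl
  simp only [hm, he] at hLD hHM hℰ hα hinv hpow0 hpowS hv ⊢
  have hskew : ∀ X Y : V, ⁅X, Y⁆ = -⁅Y, X⁆ := fun X Y => (lie_skew X Y).symm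
  have LDe : ∀ Z W, LD 1 Z W = 0 := by
    intro Z W
    have h := hHM 1 1 Z W
    simp only [one_mul] at h
    exact left_eq_add.mp h
  have brMul : ∀ Z X Y : V, ⁅Z, X * Y⁆ = LD Z X Y + ⁅Z, X⁆ * Y + X * ⁅Z, Y⁆ := by
    intro Z X Y
    linear_combination -(hLD Z X Y)
  have eBr : ∀ X Y : V, ⁅(1:V), X * Y⁆ = ⁅(1:V), X⁆ * Y + X * ⁅(1:V), Y⁆ := by
    intro X Y
    have h := brMul 1 X Y
    rw [LDe X Y, zero_add] at h
    exact h
  have LDpow : ∀ n Z W, LD (apow n) Z W = ⁅(1:V), apow n⁆ * (Z * W) := by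
    intro n
    induction n with
    | zero =>
      intro Z W
      rw [hpow0, LDe, lie_self, zero_mul]
    | succ k ih =>
      intro Z W
      rw [hpowS]
      linear_combination hHM α (apow k) Z W + α * ih Z W + apow k * hα Z W
        - (Z * W) * eBr α (apow k)
  have LDw : ∀ n Z W, LD (ℰ * apow n) Z W =
      (ℰ * ⁅(1:V), apow n⁆ + apow n * ⁅(1:V), ℰ⁆) * (Z * W) := by
    intro n Z W
    linear_combination hHM ℰ (apow n) Z W + ℰ * LDpow n Z W + apow n * hℰ Z W
  have hc12 : ⁅ℰ, ℰ * α⁆ = 0 := by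
    have h1 := hv 1
    have h2 := hv 2
    norm_num [hpowS, hpow0] at h1 h2
    have hc := hcomm12
    rw [h1, h2] at hc
    exact hc
  have hEα : ⁅ℰ, α⁆ = -(⁅(1:V), ℰ⁆ * α) := by
    have h : ℰ * ⁅ℰ, α⁆ = -(⁅(1:V), ℰ⁆ * (ℰ * α)) := by
      linear_combination hc12 - brMul ℰ ℰ α - hℰ ℰ α - α * lie_self ℰ
    linear_combination Einv * h - (⁅ℰ, α⁆ + ⁅(1:V), ℰ⁆ * α) * hinv
  have hEpow : ∀ n, ⁅ℰ, apow n⁆ = -(apow n * ⁅(1:V), ℰ⁆) := by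
    intro n
    induction n with
    | zero =>
      rw [hpow0, one_mul]
      exact hskew ℰ 1
    | succ k ih =>
      rw [hpowS]
      linear_combination brMul ℰ α (apow k) + hℰ α (apow k) + apow k * hEα + α * ih
  have hEw : ∀ n, ⁅ℰ, ℰ * apow n⁆ = 0 := fun n => by
    linear_combination brMul ℰ ℰ (apow n) + hℰ ℰ (apow n) + apow n * lie_self ℰ
      + ℰ * hEpow n
  have hαpow : ∀ n, ⁅α, apow n⁆ = α * ⁅(1:V), apow n⁆ - apow n * ⁅(1:V), α⁆ := by
    intro n
    induction n with
    | zero =>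
      rw [hpow0, lie_self, mul_zero, one_mul, zero_sub]
      exact hskew α 1
    | succ k ih =>
      rw [hpowS]
      linear_combination brMul α α (apow k) + hα α (apow k) + apow k * lie_self α
        + α * ih - α * eBr α (apow k)
  have hαE : ⁅α, ℰ⁆ = ⁅(1:V), ℰ⁆ * α := by
    linear_combination hskew α ℰ - hEα
  have hwα : ∀ n, ⁅α, ℰ * apow n⁆ =
      α * (ℰ * ⁅(1:V), apow n⁆ + apow n * ⁅(1:V), ℰ⁆) := by
    intro n
    linear_combination brMul α ℰ (apow n) + hα ℰ (apow n) + ℰ * hαpow n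
      + apow n * hαE
  have hK : ∀ n m, ⁅ℰ * apow n, apow m⁆ =
      -(apow m * (ℰ * ⁅(1:V), apow n⁆ + apow n * ⁅(1:V), ℰ⁆)) := by
    intro n m
    induction m with
    | zero =>
      rw [hpow0]
      linear_combination hskew (ℰ * apow n) 1 - eBr ℰ (apow n)
    | succ k ih =>
      rw [hpowS]
      linear_combination brMul (ℰ * apow n) α (apow k) + LDw n α (apow k)
        + α * ih + apow k * hskew (ℰ * apow n) α - apow k * hwα n
  have main : ∀ n m, ⁅ℰ * apow n, ℰ * apow m⁆ = 0 := by
    intro n m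
    linear_combination brMul (ℰ * apow n) ℰ (apow m) + LDw n ℰ (apow m)
      + ℰ * hK n m + apow m * hskew (ℰ * apow n) ℰ - apow m * hEw n
  have mainv : ∀ i j, ⁅v i, v j⁆ = 0 := fun i j => by
    rw [hv i, hv j]; exact main _ _
  constructor
  · intro i j _ _ _
    rw [hcomm12, mainv]
    simp
  · intro i j _ _
    exact mainv i j
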